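/- arXiv:2507.03413 — 2 statements merged into one kernel-verified Lean document; each statement's English description precedes it below -/
import Mathlib

section
/- The family of subsets A ⊆ ℕ that are B_h[g] sets for some integers h ≥ 2 and g ≥ 1 is a meager subset of the Cantor space 𝒫(ℕ). -/
open Filter Topology Set
open scoped ENNReal

/-- Number of unordered representations of `x` as a sum of `h` elements of `A`
(repetitions allowed): multisets of size `h` with elements in `A` summing to `x`. -/
noncomputable def repCount {X : Type*} [AddCommMonoid X] (A : Set X) (h : ℕ) (x : X) : ℕ :=
  Nat.card {s : Multiset X // Multiset.card s = h ∧ (∀ a ∈ s, a ∈ A) ∧ s.sum = x}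

/-- `A` is a `B_h[g]` set: every `x` has at most `g` unordered representations. -/
def IsBhg {X : Type*} [AddCommMonoid X] (A : Set X) (h g : ℕ) : Prop :=
  ∀ x, repCount A h x ≤ g

/-- `A ⊆ ℕ` is a Sidon set. -/
def IsSidonSet (A : Set ℕ) : Prop :=
  ∀ a b c d, a ∈ A → b ∈ A → c ∈ A → d ∈ A → a ≤ b → c ≤ d → a + b = c + d → a = c ∧ b = d

/-- Lower asymptotic density. -/
noncomputable def lowerDensity (S : Set ℕ) : ℝ :=
  Filter.liminf (fun n => ((S ∩ Set.Ico 0 n).ncard : ℝ) / n) Filter.atTop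

/-- Upper asymptotic density. -/
noncomputable def upperDensity (S : Set ℕ) : ℝ :=
  Filter.limsup (fun n => ((S ∩ Set.Ico 0 n).ncard : ℝ) / n) Filter.atTop

lemma mem_le_sum {s : Multiset ℕ} {a : ℕ} (ha : a ∈ s) : a ≤ s.sum := by
  obtain ⟨t, rfl⟩ := Multiset.exists_cons_of_mem ha
  simp [Multiset.sum_cons]

/-- The set of representing multisets is finite. -/
lemma repSet_finite (A : Set ℕ) (h x : ℕ) :
    {s : Multiset ℕ | Multiset.card s = h ∧ (∀ a ∈ s, a ∈ A) ∧ s.sum = x}.Finite := by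
  apply Set.Finite.subset (Multiset.finite_toSet ((h • Multiset.range (x + 1)).powerset))
  rintro s ⟨hcard, -, hsum⟩
  simp only [Set.mem_setOf_eq, Multiset.mem_powerset]
  rw [Multiset.le_iff_count]
  intro a
  by_cases ha : a ∈ s
  · have h1 : a ≤ x := hsum ▸ mem_le_sum ha
    have h2 : Multiset.count a s ≤ h := hcard ▸ Multiset.count_le_card a s
    rw [Multiset.count_nsmul, Multiset.count_eq_one_of_mem (Multiset.nodup_range _)
      (Multiset.mem_range.mpr (by omega))]
    omega
  · simp [Multiset.count_eq_zero_of_notMem ha]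

/-- `repCount` only depends on elements `≤ x`. -/
lemma repCount_congr {A B : Set ℕ} (h x : ℕ) (hAB : ∀ n ≤ x, (n ∈ A ↔ n ∈ B)) :
    repCount A h x = repCount B h x := by
  apply Nat.card_congr
  apply Equiv.subtypeEquivRight
  intro s
  constructor
  · rintro ⟨h1, h2, h3⟩
    exact ⟨h1, fun a ha => (hAB a (h3 ▸ mem_le_sum ha)).mp (h2 a ha), h3⟩
  · rintro ⟨h1, h2, h3⟩
    exact ⟨h1, fun a ha => (hAB a (h3 ▸ mem_le_sum ha)).mpr (h2 a ha), h3⟩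

/-- If `A` contains a tail `[N, ∞)` then it is not a `B_h[g]` set (`h ≥ 2`, `g ≥ 1`). -/
lemma not_isBhg_of_tail (A : Set ℕ) (N h g : ℕ) (hh : 2 ≤ h) (hg : 1 ≤ g)
    (hA : ∀ n, N ≤ n → n ∈ A) : ¬ IsBhg A h g := by
  intro hB
  set x := h * N + 2 * g with hx
  -- build g+1 distinct representations of x
  set T := {s : Multiset ℕ // Multiset.card s = h ∧ (∀ a ∈ s, a ∈ A) ∧ s.sum = x} with hT
  have : Finite T := (repSet_finite A h x).to_subtype
  set F : Fin (g + 1) → T := fun i =>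
    ⟨(N + i) ::ₘ (N + 2 * g - i) ::ₘ Multiset.replicate (h - 2) N, by
      have hi : (i : ℕ) ≤ g := Nat.lt_succ_iff.mp i.isLt
      refine ⟨?_, ?_, ?_⟩
      · simp only [Multiset.card_cons, Multiset.card_replicate]; omega
      · intro a ha
        simp only [Multiset.mem_cons] at ha
        rcases ha with rfl | rfl | ha
        · exact hA _ (Nat.le_add_right _ _)
        · exact hA _ (by omega)
        · exact hA _ (le_of_eq (Multiset.eq_of_mem_replicate ha).symm)
      · simp only [Multiset.sum_cons, Multiset.sum_replicate, smul_eq_mul]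
        have e1 : (h - 2) * N = h * N - 2 * N := Nat.sub_mul h 2 N
        have e2 : 2 * N ≤ h * N := Nat.mul_le_mul_right N hh
        omega⟩ with hF
  have hinj : Function.Injective F := by
    intro i j hij
    have hi : (i : ℕ) ≤ g := Nat.lt_succ_iff.mp i.isLt
    have hj : (j : ℕ) ≤ g := Nat.lt_succ_iff.mp j.isLt
    have heq : ((N + i) ::ₘ (N + 2 * g - i) ::ₘ Multiset.replicate (h - 2) N : Multiset ℕ)
        = (N + j) ::ₘ (N + 2 * g - j) ::ₘ Multiset.replicate (h - 2) N := by
      have := congrArg Subtype.val hij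
      simpa [hF] using this
    have h1 : (N + (i : ℕ)) ∈ ((N + j) ::ₘ (N + 2 * g - j) ::ₘ
        Multiset.replicate (h - 2) N : Multiset ℕ) := by
      rw [← heq]; exact Multiset.mem_cons_self _ _
    have h2 : (N + (j : ℕ)) ∈ ((N + i) ::ₘ (N + 2 * g - i) ::ₘ
        Multiset.replicate (h - 2) N : Multiset ℕ) := by
      rw [heq]; exact Multiset.mem_cons_self _ _
    simp only [Multiset.mem_cons] at h1 h2
    have d1 : N + (i : ℕ) = N + j ∨ N + (i : ℕ) = N + 2 * g - j ∨ N + (i : ℕ) = N := by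
      rcases h1 with h1 | h1 | h1
      · exact Or.inl h1
      · exact Or.inr (Or.inl h1)
      · exact Or.inr (Or.inr (Multiset.eq_of_mem_replicate h1))
    have d2 : N + (j : ℕ) = N + i ∨ N + (j : ℕ) = N + 2 * g - i ∨ N + (j : ℕ) = N := by
      rcases h2 with h2 | h2 | h2
      · exact Or.inl h2
      · exact Or.inr (Or.inl h2)
      · exact Or.inr (Or.inr (Multiset.eq_of_mem_replicate h2))
    have : (i : ℕ) = j := by omega
    exact Fin.ext this
  have hcard : g + 1 ≤ repCount A h x := by
    have := Nat.card_le_card_of_injective F hinj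
    simpa [repCount, Nat.card_eq_fintype_card] using this
  have := hB x
  omega

/-- For each `h, g`, the set of `f` whose associated set is `B_{h+2}[g+1]` is closed. -/
lemma isClosed_bhgSet (h g : ℕ) :
    IsClosed {f : ℕ → Bool | IsBhg {n | f n = true} h g} := by
  have : {f : ℕ → Bool | IsBhg {n | f n = true} h g}
      = ⋂ x, {f : ℕ → Bool | repCount {n | f n = true} h x ≤ g} := by
    ext f; simp [IsBhg]
  rw [this]
  refine isClosed_iInter fun x => ?_
  rw [← isOpen_compl_iff, isOpen_iff_mem_nhds]
  intro f hf
  have hev : ∀ᶠ f' in 𝓝 f, ∀ n ∈ Set.Iic x, f' n = f n := by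
    rw [eventually_all_finite (Set.finite_Iic x)]
    intro n _
    have : IsOpen {f' : ℕ → Bool | f' n = f n} := by
      show IsOpen ((fun f' : ℕ → Bool => f' n) ⁻¹' {b | b = f n})
      exact (isOpen_discrete _).preimage (continuous_apply n)
    exact this.mem_nhds rfl
  refine Filter.mem_of_superset hev ?_
  intro f' hf'
  have : repCount {n | f' n = true} h x = repCount {n | f n = true} h x := by
    apply repCount_congr
    intro n hn
    simp [hf' n hn]
  simpa [Set.mem_compl_iff, this] using hf

/-- For each `h ≥ 2`, `g ≥ 1`, the set of `B_h[g]` characteristic functions is nowhere dense,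
hence meagre. -/
lemma isMeagre_bhgSet (h g : ℕ) (hh : 2 ≤ h) (hg : 1 ≤ g) :
    IsMeagre {f : ℕ → Bool | IsBhg {n | f n = true} h g} := by
  set S := {f : ℕ → Bool | IsBhg {n | f n = true} h g} with hS
  have hclosed := isClosed_bhgSet h g
  have hdense : Dense Sᶜ := by
    rw [dense_iff_closure_eq, Set.eq_univ_iff_forall]
    intro f
    have hmem : ∀ N : ℕ, (fun n => if n < N then f n else true) ∈ Sᶜ := by
      intro N
      simp only [Set.mem_compl_iff, hS, Set.mem_setOf_eq]
      apply not_isBhg_of_tail _ N h g hh hg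
      intro n hn
      simp only [Set.mem_setOf_eq, if_neg (Nat.not_lt.mpr hn)]
    have htend : Filter.Tendsto (fun N : ℕ => (fun n => if n < N then f n else true))
        Filter.atTop (𝓝 f) := by
      rw [tendsto_pi_nhds]
      intro n
      apply Filter.Tendsto.congr' (f₁ := fun _ => f n)
      · filter_upwards [Filter.eventually_ge_atTop (n + 1)] with N hN
        simp [Nat.lt_of_lt_of_le (Nat.lt_succ_self n) hN]
      · exact tendsto_const_nhds
    exact mem_closure_of_tendsto htend (Filter.Eventually.of_forall hmem)
  have hint : interior S = ∅ := by
    rw [interior_eq_empty_iff_dense_compl]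
    exact hdense
  have hnwd : IsNowhereDense S := hclosed.isNowhereDense_iff.mpr hint
  rw [isMeagre_iff_countable_union_isNowhereDense]
  exact ⟨{S}, by simpa using hnwd, Set.countable_singleton _, by simp⟩

theorem stmt4 :
    IsMeagre {f : ℕ → Bool | ∃ h, 2 ≤ h ∧ ∃ g, 1 ≤ g ∧ IsBhg {n | f n = true} h g} := by
  have hsub : {f : ℕ → Bool | ∃ h, 2 ≤ h ∧ ∃ g, 1 ≤ g ∧ IsBhg {n | f n = true} h g}
      ⊆ ⋃ k : ℕ, {f : ℕ → Bool | IsBhg {n | f n = true} (k.unpair.1 + 2) (k.unpair.2 + 1)} := by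
    rintro f ⟨h, hh, g, hg, hB⟩
    refine Set.mem_iUnion.mpr ⟨Nat.pair (h - 2) (g - 1), ?_⟩
    simp only [Set.mem_setOf_eq, Nat.unpair_pair]
    have e1 : h - 2 + 2 = h := by omega
    have e2 : g - 1 + 1 = g := by omega
    rw [e1, e2]
    exact hB
  refine IsMeagre.mono hsub ?_
  apply isMeagre_iUnion
  intro k
  exact isMeagre_bhgSet _ _ (by omega) (by omega)
end

section
/- Fix an integer h ≥ 2. The family of all sets A ⊆ ℕ with liminf_{n→∞} r_{A,h}(n) = 0 is a comeager subset of the Cantor space 𝒫(ℕ). -/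
open Filter Topology Set
open scoped ENNReal

lemma repCount_congr_s8 (h n : ℕ) {f g : ℕ → Bool} (hfg : ∀ m ≤ n, f m = g m) :
    repCount {m | f m = true} h n = repCount {m | g m = true} h n := by
  unfold repCount
  apply Nat.card_congr
  refine Equiv.subtypeEquiv (Equiv.refl _) fun s => ?_
  simp only [Equiv.refl_apply]
  constructor <;> rintro ⟨h1, h2, h3⟩ <;> refine ⟨h1, fun a ha => ?_, h3⟩ <;>
    have hle : a ≤ n := h3 ▸ Multiset.single_le_sum (fun x _ => Nat.zero_le x) a ha
  · have := h2 a ha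
    simpa [Set.mem_setOf_eq, ← hfg a hle] using this
  · have := h2 a ha
    simpa [Set.mem_setOf_eq, hfg a hle] using this

lemma repCount_eq_zero {f : ℕ → Bool} {k h n : ℕ}
    (hf : ∀ m, k ≤ m → f m = false) (hn : h * k < n) :
    repCount {m | f m = true} h n = 0 := by
  unfold repCount
  rw [Nat.card_eq_zero]
  left
  rw [isEmpty_subtype]
  rintro s ⟨hc, hA, hs⟩
  have hbound : ∀ a ∈ s, a ≤ k := by
    intro a ha
    by_contra hak
    have hfa := hf a (by omega)
    have := hA a ha
    simp [Set.mem_setOf_eq, hfa] at this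
  have := Multiset.sum_le_card_nsmul s k hbound
  rw [hs, hc, smul_eq_mul] at this
  omega

theorem stmt8 (h : ℕ) (hh : 2 ≤ h) :
    {f : ℕ → Bool |
      Filter.liminf (fun n => (repCount {m | f m = true} h n : ℝ≥0∞)) Filter.atTop = 0}
      ∈ residual (ℕ → Bool) := by
  set U : ℕ → Set (ℕ → Bool) :=
    fun N => ⋃ n, ⋃ (_ : N ≤ n), {f | repCount {m | f m = true} h n = 0} with hU
  have hopen : ∀ n : ℕ, IsOpen {f : ℕ → Bool | repCount {m | f m = true} h n = 0} := by
    intro n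
    rw [isOpen_iff_forall_mem_open]
    intro f hf
    refine ⟨Set.pi (Set.Iic n) (fun i => {f i}), ?_, ?_, ?_⟩
    · intro g hg
      have : ∀ m ≤ n, g m = f m := fun m hm => hg m hm
      simpa [Set.mem_setOf_eq, repCount_congr_s8 h n this] using hf
    · exact isOpen_set_pi (Set.finite_Iic n) (fun a _ => isOpen_discrete _)
    · intro i _; rfl
  have hUres : ∀ N, U N ∈ residual (ℕ → Bool) := by
    intro N
    apply residual_of_dense_open
    · exact isOpen_iUnion fun n => isOpen_iUnion fun _ => hopen n
    · rw [dense_iff_inter_open]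
      rintro V hV ⟨f, hf⟩
      obtain ⟨I, u, hu, hsub⟩ := isOpen_pi_iff.1 hV f hf
      set k := (I.sup id) + 1 with hk
      set g : ℕ → Bool := fun m => if m < k then f m else false with hg
      refine ⟨g, hsub ?_, ?_⟩
      · intro i hi
        have : i < k := Nat.lt_succ_of_le (Finset.le_sup (f := id) hi)
        simpa [hg, this] using (hu i hi).2
      · have hz : repCount {m | g m = true} h (N + h * k + 1) = 0 :=
          repCount_eq_zero (k := k) (fun m hm => by simp [hg, Nat.not_lt.2 hm]) (by omega)
        exact Set.mem_iUnion.2 ⟨N + h * k + 1, Set.mem_iUnion.2 ⟨by omega, hz⟩⟩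
  refine Filter.mem_of_superset ((countable_iInter_mem).2 hUres) ?_
  intro f hf
  simp only [Set.mem_iInter, hU, Set.mem_iUnion, Set.mem_setOf_eq] at hf
  refine le_antisymm ?_ zero_le
  apply Filter.liminf_le_of_frequently_le'
  rw [Filter.frequently_atTop]
  intro N
  obtain ⟨n, hn, hzero⟩ := hf N
  exact ⟨n, hn, by simp [hzero]⟩
end
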